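/- Let z(ζ) = Dζ + r be an AAR solution of the matrix-uncertain LCP with J = {j : r_j > 0}, and suppose M⁰_J is invertible. Then r and D are uniquely determined by: r_J = -(M⁰_J)^{-1} q_J, D_{J,i} = (M⁰_J)^{-1} Mⁱ_J (M⁰_J)^{-1} q_J for all i ∈ [k], r_N = 0, and D_{N,·} = 0 where N = [n]∖J. -/

import Mathlib

open Matrix BigOperators
open scoped Classical

noncomputable section

/-- `z(ζ) = Dζ + r` is an affinely adjustable robust solution of the
matrix-uncertain LCP `0 ≤ z(ζ) ⊥ M(ζ) z(ζ) + q ≥ 0` for all `ζ ∈ [-1,1]^k`,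
where `M(ζ) = M⁰ + Σ ζ_i Mⁱ`. -/
def IsAARM {n k : ℕ} (M0 : Matrix (Fin n) (Fin n) ℝ)
    (Mi : Fin k → Matrix (Fin n) (Fin n) ℝ) (q : Fin n → ℝ)
    (D : Matrix (Fin n) (Fin k) ℝ) (r : Fin n → ℝ) : Prop :=
  ∀ ζ : Fin k → ℝ, (∀ t, -1 ≤ ζ t ∧ ζ t ≤ 1) →
    (∀ i, 0 ≤ (D.mulVec ζ + r) i) ∧
    (∀ i, 0 ≤ ((M0 + ∑ t, ζ t • Mi t).mulVec (D.mulVec ζ + r) + q) i) ∧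
    ∑ i, (D.mulVec ζ + r) i *
        ((M0 + ∑ t, ζ t • Mi t).mulVec (D.mulVec ζ + r) + q) i = 0

/-- if `z(ζ) = Dζ + r` is an AAR solution of the
matrix-uncertain LCP with `J = {j : r_j > 0}` and `M⁰_J` invertible, then
`r` and `D` are uniquely determined by the stated formulas. -/
theorem stmt_18 (n k : ℕ) (M0 : Matrix (Fin n) (Fin n) ℝ)
    (Mi : Fin k → Matrix (Fin n) (Fin n) ℝ) (q : Fin n → ℝ)
    (D : Matrix (Fin n) (Fin k) ℝ) (r : Fin n → ℝ)
    (hr : ∀ j, 0 ≤ r j)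
    (hAAR : IsAARM M0 Mi q D r)
    (hinv : IsUnit (Matrix.of fun i j : {l : Fin n // 0 < r l} =>
        M0 i.1 j.1).det) :
    -- `r_J = -(M⁰_J)⁻¹ q_J`
    (∀ i : {l : Fin n // 0 < r l},
      r i.1 = -(((Matrix.of fun a b : {l : Fin n // 0 < r l} =>
          M0 a.1 b.1))⁻¹.mulVec (fun j : {l : Fin n // 0 < r l} => q j.1)) i) ∧
    -- `D_{J,i} = (M⁰_J)⁻¹ Mⁱ_J (M⁰_J)⁻¹ q_J`
    (∀ (t : Fin k) (i : {l : Fin n // 0 < r l}),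
      D i.1 t =
        ((((Matrix.of fun a b : {l : Fin n // 0 < r l} => M0 a.1 b.1))⁻¹ *
          (Matrix.of fun a b : {l : Fin n // 0 < r l} => (Mi t) a.1 b.1) *
          ((Matrix.of fun a b : {l : Fin n // 0 < r l} => M0 a.1 b.1))⁻¹).mulVec
            (fun j : {l : Fin n // 0 < r l} => q j.1)) i) ∧
    -- `r_N = 0`
    (∀ i : Fin n, ¬ 0 < r i → r i = 0) ∧
    -- `D_{N,·} = 0`
    (∀ i : Fin n, ¬ 0 < r i → ∀ t, D i t = 0) := by
  classical
  have hN : ∀ i : Fin n, ¬ 0 < r i → r i = 0 := fun i h =>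
    le_antisymm (not_lt.1 h) (hr i)
  -- pointwise complementarity
  have hcomp : ∀ ζ : Fin k → ℝ, (∀ t, -1 ≤ ζ t ∧ ζ t ≤ 1) → ∀ i,
      (D.mulVec ζ + r) i *
        ((M0 + ∑ t, ζ t • Mi t).mulVec (D.mulVec ζ + r) + q) i = 0 := by
    intro ζ hζ i
    obtain ⟨h1, h2, h3⟩ := hAAR ζ hζ
    exact (Finset.sum_eq_zero_iff_of_nonneg
      (fun j _ => mul_nonneg (h1 j) (h2 j))).1 h3 i (Finset.mem_univ i)
  -- bounds for Pi.single vectors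
  have hbnd : ∀ (t : Fin k) (c : ℝ), -1 ≤ c → c ≤ 1 →
      ∀ s : Fin k, -1 ≤ (Pi.single t c : Fin k → ℝ) s ∧
        (Pi.single t c : Fin k → ℝ) s ≤ 1 := by
    intro t c hc1 hc2 s
    by_cases h : s = t
    · subst h
      rw [Pi.single_eq_same]
      exact ⟨hc1, hc2⟩
    · rw [Pi.single_eq_of_ne h]
      norm_num
  -- D vanishes off J
  have hD0 : ∀ i : Fin n, ¬ 0 < r i → ∀ t, D i t = 0 := by
    intro i hi t
    have key1 : ∀ c : ℝ, -1 ≤ c → c ≤ 1 → 0 ≤ D i t * c := by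
      intro c hc1 hc2
      have h1 := (hAAR _ (hbnd t c hc1 hc2)).1 i
      simpa [Matrix.mulVec_single, hN i hi, mul_comm] using h1
    have p1 := key1 1 (by norm_num) le_rfl
    have p2 := key1 (-1) (le_refl _) (by norm_num)
    simp only [mul_one, mul_neg_one, neg_nonneg] at p1 p2
    linarith
  -- w(0)_i = 0 on J
  have hw0 : ∀ i : Fin n, 0 < r i → (M0.mulVec r + q) i = 0 := by
    intro i hi
    have hb0 : ∀ s : Fin k, -1 ≤ (0 : Fin k → ℝ) s ∧ (0 : Fin k → ℝ) s ≤ 1 := by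
      intro s
      constructor <;> simp
    have h := hcomp 0 hb0 i
    simp only [Matrix.mulVec_zero, zero_add, Pi.zero_apply, zero_smul,
      Finset.sum_const_zero, add_zero] at h
    exact (mul_eq_zero.1 h).resolve_left (ne_of_gt hi)
  -- linear coefficient vanishes on J
  have hb : ∀ i : Fin n, 0 < r i → ∀ t : Fin k,
      ((Mi t).mulVec r) i + (M0.mulVec (fun j => D j t)) i = 0 := by
    intro i hi t
    set d : Fin n → ℝ := fun j => D j t with hd
    -- expansion of w at ζ = Pi.single t ε
    have key : ∀ ε : ℝ, -1 ≤ ε → ε ≤ 1 → 0 < ε * D i t + r i →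
        ε * (((Mi t).mulVec r) i + (M0.mulVec d) i)
          + ε^2 * (((Mi t).mulVec d) i) = 0 := by
      intro ε hε1 hε2 hz
      have h := hcomp (Pi.single t ε) (hbnd t ε hε1 hε2) i
      have hsum : (∑ s, (Pi.single t ε : Fin k → ℝ) s • Mi s) = ε • Mi t := by
        rw [Finset.sum_eq_single_of_mem t (Finset.mem_univ t)
          (fun s _ hs => by rw [Pi.single_eq_of_ne hs, zero_smul]),
          Pi.single_eq_same]
      rw [hsum, Matrix.mulVec_single] at h
      have hz' : (MulOpposite.op ε • D.col t + r) = ε • d + r := by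
        funext j
        simp [hd, mul_comm]
      rw [hz'] at h
      have hexp : ((M0 + ε • Mi t).mulVec (ε • d + r) + q) i
          = (M0.mulVec r + q) i
            + (ε * (((Mi t).mulVec r) i + (M0.mulVec d) i)
            + ε^2 * (((Mi t).mulVec d) i)) := by
        simp only [Matrix.add_mulVec, Matrix.mulVec_add, Matrix.mulVec_smul,
          Matrix.smul_mulVec, Pi.add_apply, Pi.smul_apply, smul_eq_mul,
          smul_smul]
        ring
      rw [hexp, hw0 i hi, zero_add] at h
      have hzi : (ε • d + r) i ≠ 0 := by
        have he : (ε • d + r) i = ε * D i t + r i := by simp [hd]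
        rw [he]
        exact ne_of_gt hz
      exact (mul_eq_zero.1 h).resolve_left hzi
    -- choose small ε > 0
    set ε : ℝ := min 1 (r i / (2 * (|D i t| + 1))) with hεdef
    have habs : 0 ≤ |D i t| := abs_nonneg _
    have hεpos : 0 < ε := by
      apply lt_min one_pos
      positivity
    have hε1 : ε ≤ 1 := min_le_left _ _
    have hε2 : ε ≤ r i / (2 * (|D i t| + 1)) := min_le_right _ _
    have h2d : ε * (2 * (|D i t| + 1)) ≤ r i :=
      (le_div_iff₀ (by positivity)).1 hε2
    have hsmall : ε * |D i t| < r i := by nlinarith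
    have hDle : -|D i t| ≤ D i t := neg_abs_le _
    have hDle' : D i t ≤ |D i t| := le_abs_self _
    have hpos : 0 < ε * D i t + r i := by nlinarith
    have hneg : 0 < (-ε) * D i t + r i := by nlinarith
    have e1 := key ε (by linarith) hε1 hpos
    have e2 := key (-ε) (by linarith) (by linarith) hneg
    have h2e : (2 * ε) * (((Mi t).mulVec r) i + (M0.mulVec d) i) = 0 := by
      nlinarith [e1, e2]
    rcases mul_eq_zero.1 h2e with h | h
    · exfalso; linarith
    · exact h
  -- subtype machinery
  set T := {l : Fin n // 0 < r l} with hT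
  set A : Matrix T T ℝ := Matrix.of fun a b : T => M0 a.1 b.1 with hA
  have hsub : ∀ g : Fin n → ℝ, (∀ j, ¬ 0 < r j → g j = 0) →
      ∑ j : T, g j.1 = ∑ j, g j := by
    intro g hg
    have h1 : ∑ j ∈ Finset.univ.filter (fun j => 0 < r j), g j
        = ∑ j : T, g j.1 :=
      Finset.sum_subtype (p := fun j => 0 < r j) _ (fun x => by simp) g
    rw [← h1]
    apply Finset.sum_subset (Finset.filter_subset _ _)
    intro x _ hx
    simp only [Finset.mem_filter, Finset.mem_univ, true_and] at hx
    exact hg x hx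
  have hAr : A.mulVec (fun j : T => r j.1) = fun i : T => -(q i.1) := by
    funext i
    have h : ∑ j, M0 i.1 j * r j + q i.1 = 0 := hw0 i.1 i.2
    have e1 : ∑ j : T, M0 i.1 j.1 * r j.1 = ∑ j, M0 i.1 j * r j :=
      hsub (fun j => M0 i.1 j * r j) (fun j hj => by simp [hN j hj])
    show ∑ j : T, M0 i.1 j.1 * r j.1 = -(q i.1)
    rw [e1]
    linarith
  have hAinv : A⁻¹ * A = 1 := Matrix.nonsing_inv_mul A hinv
  have hsolve : ∀ x b : T → ℝ, A.mulVec x = b → x = A⁻¹.mulVec b := by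
    intro x b hx
    rw [← hx, Matrix.mulVec_mulVec, hAinv, Matrix.one_mulVec]
  have hrJ : (fun j : T => r j.1)
      = -(A⁻¹.mulVec (fun j : T => q j.1)) := by
    rw [hsolve _ _ hAr]
    have he : (fun i : T => -(q i.1)) = -(fun j : T => q j.1) := by
      funext i; rfl
    rw [he, Matrix.mulVec_neg]
  refine ⟨fun i => congrFun hrJ i, ?_, hN, hD0⟩
  intro t i
  set B : Matrix T T ℝ := Matrix.of fun a b : T => (Mi t) a.1 b.1 with hB
  have hAd : A.mulVec (fun j : T => D j.1 t)
      = -(B.mulVec (fun j : T => r j.1)) := by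
    funext i'
    have h : ∑ j, Mi t i'.1 j * r j + ∑ j, M0 i'.1 j * D j t = 0 :=
      hb i'.1 i'.2 t
    have e1 : ∑ j : T, M0 i'.1 j.1 * D j.1 t = ∑ j, M0 i'.1 j * D j t :=
      hsub (fun j => M0 i'.1 j * D j t) (fun j hj => by simp [hD0 j hj t])
    have e2 : ∑ j : T, Mi t i'.1 j.1 * r j.1 = ∑ j, Mi t i'.1 j * r j :=
      hsub (fun j => Mi t i'.1 j * r j) (fun j hj => by simp [hN j hj])
    show ∑ j : T, M0 i'.1 j.1 * D j.1 t = -(∑ j : T, Mi t i'.1 j.1 * r j.1)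
    rw [e1, e2]
    linarith
  have hdJ : (fun j : T => D j.1 t)
      = (A⁻¹ * B * A⁻¹).mulVec (fun j : T => q j.1) := by
    rw [hsolve _ _ hAd, hrJ]
    rw [Matrix.mulVec_neg, Matrix.mulVec_neg, Matrix.mulVec_neg, neg_neg,
      Matrix.mulVec_mulVec, Matrix.mulVec_mulVec]
  exact congrFun hdJ i
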